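/- arXiv:1304.4491 — 3 statements merged into one kernel-verified Lean document; each statement's English description precedes it below -/
import Mathlib

section
/- Let p ≥ 3 be a prime. The number of elements a ∈ F_p such that the diagonal line j = i + a is a desert line of the Periodic Point Diagram of x ↦ x^2 + c (i.e., such that for all i ∈ F_p and all r ≥ 1, h_i^r(i+a) ≠ i + a) is exactly (p-1)/2. -/
open Finset

lemma card_nonsquares (p : ℕ) (hp : p.Prime) (hp3 : 3 ≤ p) [Fact p.Prime] [DecidablePred (IsSquare (α := ZMod p))] :
    (univ.filter fun a : ZMod p => ¬ IsSquare a).card = (p - 1) / 2 := by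
  classical
  have hp2 : p ≠ 2 := by omega
  have hodd : Odd p := hp.odd_of_ne_two hp2
  have hcard : Fintype.card (ZMod p) = p := ZMod.card p
  -- squares = image of squaring
  have himg : (univ.filter fun a : ZMod p => IsSquare a) = univ.image (fun x : ZMod p => x * x) := by
    ext a
    rw [Finset.mem_filter]
    simp [IsSquare, eq_comm]
  -- card of image
  have hsum : (univ : Finset (ZMod p)).card =
      ∑ b ∈ univ.image (fun x : ZMod p => x * x), (univ.filter fun x => x * x = b).card :=
    Finset.card_eq_sum_card_image _ _
  have hfiber : ∀ b ∈ univ.image (fun x : ZMod p => x * x),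
      (univ.filter fun x : ZMod p => x * x = b).card = if b = 0 then 1 else 2 := by
    intro b hb
    obtain ⟨x, -, hx⟩ := Finset.mem_image.mp hb
    by_cases hb0 : b = 0
    · subst hb0
      rw [if_pos rfl]
      have : (univ.filter fun x : ZMod p => x * x = 0) = {0} := by
        ext y; simp [mul_self_eq_zero]
      rw [this, Finset.card_singleton]
    · rw [if_neg hb0]
      have hx0 : x ≠ 0 := by rintro rfl; simp at hx; exact hb0 hx.symm
      have : (univ.filter fun y : ZMod p => y * y = b) = {x, -x} := by
        ext y
        simp only [Finset.mem_filter, Finset.mem_univ, true_and, Finset.mem_insert,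
          Finset.mem_singleton]
        constructor
        · intro hy
          have : (y - x) * (y + x) = 0 := by ring_nf; rw [← hx] at hy; linear_combination hy
          rcases mul_eq_zero.mp this with h | h
          · left; exact sub_eq_zero.mp h
          · right; exact eq_neg_of_add_eq_zero_left h
        · rintro (rfl | rfl) <;> [exact hx; simpa using hx]
      rw [this]
      rw [Finset.card_insert_of_notMem, Finset.card_singleton]
      simp only [Finset.mem_singleton]
      intro h
      have : (2 : ZMod p) * x = 0 := by linear_combination h
      have h2 : (2 : ZMod p) ≠ 0 := by
        intro h2
        have h3 : ((2 : ℕ) : ZMod p) = 0 := by exact_mod_cast h2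
        rw [ZMod.natCast_eq_zero_iff] at h3
        have := Nat.le_of_dvd (by norm_num) h3
        omega
      exact hx0 (by rcases mul_eq_zero.mp this with h | h; exact absurd h h2; exact h)
  have h0mem : (0 : ZMod p) ∈ univ.image (fun x : ZMod p => x * x) :=
    Finset.mem_image.mpr ⟨0, Finset.mem_univ _, by ring⟩
  have hsum2 : (univ : Finset (ZMod p)).card =
      ∑ b ∈ univ.image (fun x : ZMod p => x * x), (if b = 0 then 1 else 2) :=
    hsum.trans (Finset.sum_congr rfl hfiber)
  rw [← Finset.add_sum_erase _ _ h0mem, if_pos rfl] at hsum2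
  have herase : ∑ b ∈ (univ.image (fun x : ZMod p => x * x)).erase 0,
      (if b = 0 then 1 else 2) = 2 * ((univ.image (fun x : ZMod p => x * x)).card - 1) := by
    rw [Finset.sum_congr rfl (fun b hb => if_neg (Finset.ne_of_mem_erase hb)),
      Finset.sum_const, Finset.card_erase_of_mem h0mem, smul_eq_mul, mul_comm]
  rw [herase] at hsum2
  have hcardu : (univ : Finset (ZMod p)).card = p := by
    rw [Finset.card_univ, hcard]
  have hpos : 0 < (univ.image (fun x : ZMod p => x * x)).card :=
    Finset.card_pos.mpr ⟨0, h0mem⟩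
  have hsplit := Finset.card_filter_add_card_filter_not
    (s := (univ : Finset (ZMod p))) (p := fun a : ZMod p => IsSquare a)
  rw [himg] at hsplit
  rw [hcardu] at hsum2 hsplit
  omega


theorem stmt_7 (p : ℕ) (hp : p.Prime) (hp3 : 3 ≤ p) :
    {a : ZMod p | ∀ i : ZMod p, ∀ r : ℕ, 1 ≤ r →
      (fun x : ZMod p => x ^ 2 + i)^[r] (i + a) ≠ i + a}.ncard = (p - 1) / 2 := by
  classical
  haveI : Fact p.Prime := ⟨hp⟩
  have hset : {a : ZMod p | ∀ i : ZMod p, ∀ r : ℕ, 1 ≤ r →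
      (fun x : ZMod p => x ^ 2 + i)^[r] (i + a) ≠ i + a} = {a : ZMod p | ¬ IsSquare a} := by
    ext a
    simp only [Set.mem_setOf_eq]
    constructor
    · intro h hsq
      obtain ⟨b, rfl⟩ := hsq
      refine h (b - b * b) 1 le_rfl ?_
      simp only [Function.iterate_one]
      ring
    · intro hsq i r hr heq
      obtain ⟨s, rfl⟩ : ∃ s, r = s + 1 := ⟨r - 1, by omega⟩
      rw [Function.iterate_succ_apply'] at heq
      apply hsq
      set y := (fun x : ZMod p => x ^ 2 + i)^[s] (i + a) with hy
      refine ⟨y, ?_⟩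
      have : y ^ 2 + i = i + a := heq
      linear_combination sq y - this
  rw [hset]
  rw [show {a : ZMod p | ¬ IsSquare a} = ↑(univ.filter fun a : ZMod p => ¬ IsSquare a) by
    ext a; simp]
  rw [Set.ncard_coe_finset]
  exact card_nonsquares p hp hp3
end

section
/- Let p be a prime, n ≥ 2 an integer, and a ∈ F_p an n-power non-residue (a ≠ 0 and x^n = a has no solution in F_p). Then for every i ∈ F_p and every r ≥ 1, h_i^r(i + a) ≠ i + a, where h_c(x) = x^n + c. -/
theorem stmt_8 (p : ℕ) (hp : p.Prime) (n : ℕ) (hn : 2 ≤ n) (a : ZMod p)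
    (ha : a ≠ 0) (hnr : ¬∃ x : ZMod p, x ^ n = a) :
    ∀ i : ZMod p, ∀ r : ℕ, 1 ≤ r →
      (fun x : ZMod p => x ^ n + i)^[r] (i + a) ≠ i + a := by
  intro i r hr heq
  obtain ⟨r', rfl⟩ := Nat.exists_eq_add_of_le hr
  rw [add_comm, Function.iterate_succ_apply'] at heq
  exact hnr ⟨(fun x : ZMod p => x ^ n + i)^[r'] (i + a), by linear_combination heq⟩
end

section
/- Let p be a prime, n ≥ 2 an integer, and let Per(n, p) denote the number of pairs (c, a) ∈ F_p × F_p such that a is a periodic point of h_c(x) = x^n + c (h_c^r(a) = a for some r ≥ 1). Then p ≤ Per(n, p) ≤ p(p-1)/gcd(n, p-1) + p. -/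
open Finset

/-- In `(ZMod p)ˣ`, the image of the `n`-th power map has at most `(p-1)/gcd(n,p-1)`
elements. -/
lemma aux_card_pow_image (p : ℕ) [NeZero p] (hp : p.Prime) (n : ℕ) (hn : 2 ≤ n) :
    (Finset.univ.image (fun u : (ZMod p)ˣ => u ^ n)).card ≤
      (p - 1) / Nat.gcd n (p - 1) := by
  haveI : Fact p.Prime := ⟨hp⟩
  set g := Nat.gcd n (p - 1) with hg
  have hcard : Fintype.card (ZMod p)ˣ = p - 1 := by
    rw [ZMod.card_units_eq_totient, Nat.totient_prime hp]
  have hp1 : 0 < p - 1 := Nat.sub_pos_of_lt hp.one_lt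
  have hgpos : 0 < g := Nat.gcd_pos_of_pos_left _ (by omega)
  have hgdvd : g ∣ p - 1 := Nat.gcd_dvd_right _ _
  have hgn : g ∣ n := Nat.gcd_dvd_left _ _
  -- an element of order g
  obtain ⟨z, hz⟩ := IsCyclic.exists_ofOrder_eq_natCard (α := (ZMod p)ˣ)
  rw [Nat.card_eq_fintype_card, hcard] at hz
  set t : (ZMod p)ˣ := z ^ ((p - 1) / g) with ht
  have hordt : orderOf t = g := by
    rw [ht, orderOf_pow, hz, Nat.gcd_eq_right (Nat.div_dvd_of_dvd hgdvd),
      Nat.div_div_self hgdvd (by omega)]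
  have htn : t ^ n = 1 := by
    obtain ⟨k, hk⟩ := hgn
    rw [hk, pow_mul, ← hordt, pow_orderOf_eq_one, one_pow]
  -- fibers of the power map have at least g elements
  have hfib : ∀ b ∈ Finset.univ.image (fun u : (ZMod p)ˣ => u ^ n),
      g ≤ #{a ∈ (Finset.univ : Finset (ZMod p)ˣ) | a ^ n = b} := by
    intro b hb
    obtain ⟨u, -, rfl⟩ := Finset.mem_image.1 hb
    have : ∀ i ∈ Finset.range g, u * t ^ i ∈
        ({a ∈ (Finset.univ : Finset (ZMod p)ˣ) | a ^ n = u ^ n}) := by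
      intro i _
      simp only [Finset.mem_filter, Finset.mem_univ, true_and]
      rw [mul_pow, ← pow_mul, mul_comm i n, pow_mul, htn, one_pow, mul_one]
    calc g = #(Finset.range g) := (Finset.card_range g).symm
      _ ≤ _ := Finset.card_le_card_of_injOn (fun i => u * t ^ i) this (by
          intro i hi j hj hij
          have := mul_left_cancel hij
          have h2 := pow_injOn_Iio_orderOf (x := t)
            (by simpa [hordt] using Finset.mem_range.1 hi)
            (by simpa [hordt] using Finset.mem_range.1 hj) this
          exact h2)
  have := Finset.mul_card_image_le_card (f := fun u : (ZMod p)ˣ => u ^ n)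
    Finset.univ g hfib
  rw [Finset.card_univ, hcard] at this
  exact (Nat.le_div_iff_mul_le hgpos).2 (mul_comm g _ ▸ this)

theorem stmt_16 (p : ℕ) (hp : p.Prime) (n : ℕ) (hn : 2 ≤ n) :
    p ≤ {q : ZMod p × ZMod p | ∃ r : ℕ, 1 ≤ r ∧
          (fun x : ZMod p => x ^ n + q.1)^[r] q.2 = q.2}.ncard ∧
    {q : ZMod p × ZMod p | ∃ r : ℕ, 1 ≤ r ∧
          (fun x : ZMod p => x ^ n + q.1)^[r] q.2 = q.2}.ncard ≤
      p * ((p - 1) / Nat.gcd n (p - 1)) + p := by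
  haveI : Fact p.Prime := ⟨hp⟩
  set P : Set (ZMod p × ZMod p) := {q : ZMod p × ZMod p | ∃ r : ℕ, 1 ≤ r ∧
          (fun x : ZMod p => x ^ n + q.1)^[r] q.2 = q.2} with hP
  constructor
  · -- lower bound: fixed points
    have hmap : (fun a : ZMod p => (a - a ^ n, a)) '' Set.univ ⊆ P := by
      rintro ⟨c, a⟩ ⟨a', -, h⟩
      obtain ⟨rfl, rfl⟩ := Prod.mk.injEq .. ▸ h
      exact ⟨1, le_refl 1, by simp⟩
    have hinj : Function.Injective (fun a : ZMod p => (a - a ^ n, a)) :=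
      fun a b h => congrArg Prod.snd h
    calc p = (Set.univ : Set (ZMod p)).ncard := by
            simp [Set.ncard_univ, Nat.card_eq_fintype_card, ZMod.card]
      _ = ((fun a : ZMod p => (a - a ^ n, a)) '' Set.univ).ncard :=
            (Set.ncard_image_of_injective _ hinj).symm
      _ ≤ P.ncard := Set.ncard_le_ncard hmap (Set.toFinite _)
  · -- upper bound
    set S : Finset (ZMod p) :=
      insert 0 ((Finset.univ.image (fun u : (ZMod p)ˣ => u ^ n)).image
        (fun u : (ZMod p)ˣ => (u : ZMod p))) with hS
    -- every periodic pair has a - c an n-th power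
    have key : ∀ q ∈ P, q.2 - q.1 ∈ S := by
      rintro ⟨c, a⟩ ⟨r, hr, hiter⟩
      obtain ⟨r, rfl⟩ := Nat.exists_eq_add_of_le hr
      rw [add_comm, Function.iterate_succ_apply'] at hiter
      set y : ZMod p := (fun x : ZMod p => x ^ n + c)^[r] a with hy
      have hya : y ^ n + c = a := hiter
      simp only [hS, Finset.mem_insert, Finset.mem_image]
      rcases eq_or_ne y 0 with h0 | h0
      · left; simp [← hya, h0, zero_pow (by omega : n ≠ 0)]
      · right
        refine ⟨(Units.mk0 y h0) ^ n, ⟨Units.mk0 y h0, Finset.mem_univ _, rfl⟩, ?_⟩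
        push_cast
        simp [← hya]
    -- the injection (c, a) ↦ (a - c, c)
    have hinj : Function.Injective (fun q : ZMod p × ZMod p => (q.2 - q.1, q.1)) := by
      rintro ⟨c, a⟩ ⟨c', a'⟩ h
      simp only [Prod.mk.injEq] at h
      obtain ⟨h1, h2⟩ := h
      subst h2
      have : a = a' := by linear_combination h1
      simp [this]
    have hsub : (fun q : ZMod p × ZMod p => (q.2 - q.1, q.1)) '' P ⊆
        ↑(S ×ˢ (Finset.univ : Finset (ZMod p))) := by
      rintro ⟨d, c⟩ ⟨⟨c', a'⟩, hq, h⟩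
      obtain ⟨rfl, rfl⟩ := Prod.mk.injEq .. ▸ h
      simp only [Finset.coe_product, Set.mem_prod, Finset.mem_coe, Finset.coe_univ,
        Set.mem_univ, and_true]
      exact key _ hq
    have hScard : S.card ≤ (p - 1) / Nat.gcd n (p - 1) + 1 := by
      calc S.card ≤ ((Finset.univ.image (fun u : (ZMod p)ˣ => u ^ n)).image
            (fun u : (ZMod p)ˣ => (u : ZMod p))).card + 1 := Finset.card_insert_le _ _
        _ ≤ (Finset.univ.image (fun u : (ZMod p)ˣ => u ^ n)).card + 1 := by
            exact Nat.add_le_add_right (Finset.card_image_le) 1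
        _ ≤ (p - 1) / Nat.gcd n (p - 1) + 1 :=
            Nat.add_le_add_right (aux_card_pow_image p hp n hn) 1
    calc P.ncard = ((fun q : ZMod p × ZMod p => (q.2 - q.1, q.1)) '' P).ncard :=
          (Set.ncard_image_of_injective _ hinj).symm
      _ ≤ (↑(S ×ˢ (Finset.univ : Finset (ZMod p))) : Set (ZMod p × ZMod p)).ncard :=
          Set.ncard_le_ncard hsub (Set.toFinite _)
      _ = S.card * p := by
          rw [Set.ncard_coe_finset, Finset.card_product, Finset.card_univ, ZMod.card]
      _ ≤ ((p - 1) / Nat.gcd n (p - 1) + 1) * p := Nat.mul_le_mul_right p hScard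
      _ = p * ((p - 1) / Nat.gcd n (p - 1)) + p := by ring
end
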